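/- arXiv:1503.03416 — 2 statements merged into one kernel-verified Lean document; each statement's English description precedes it below -/
import Mathlib

section
/- Let n₂(j) denote the maximum range over all bases of length j. If A = {a₀ < ⋯ < a_k} is a restricted basis (A+A = [0, 2a_k]), then for every 0 ≤ j ≤ k-1, a_j ≥ a_k - n₂(k-j-1) - 1. -/
open Finset Pointwise

theorem stmt_9 (N : ℕ → ℕ)
    (hN : ∀ j : ℕ, IsGreatest {m : ℕ | ∃ S : Finset ℕ, 0 ∈ S ∧ S.card = j + 1 ∧
      Finset.Icc 0 m ⊆ S + S} (N j))
    (k : ℕ) (a : Fin (k + 1) → ℕ) (ha : StrictMono a)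
    (hres : Finset.image a Finset.univ + Finset.image a Finset.univ =
      Finset.Icc 0 (2 * a (Fin.last k))) :
    ∀ j : Fin (k + 1), j.val + 1 ≤ k →
      (a (Fin.last k) : ℤ) - N (k - j.val - 1) - 1 ≤ (a j : ℤ) := by
  intro j hj
  set K := Fin.last k with hK
  have hjK : j < K := by
    rw [Fin.lt_def]; simp [hK, Fin.last]; omega
  have haj : a j < a K := ha hjK
  have hle : ∀ i : Fin (k+1), a i ≤ a K := fun i => ha.monotone (Fin.le_last i)
  set S : Finset ℕ := (Finset.Ioc j K).image (fun i => a K - a i) with hS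
  have h0 : (0:ℕ) ∈ S := by
    refine mem_image.2 ⟨K, ?_, ?_⟩
    · exact mem_Ioc.2 ⟨hjK, le_refl K⟩
    · simp
  have hcard : S.card = (k - j.val - 1) + 1 := by
    rw [hS, Finset.card_image_of_injOn, Fin.card_Ioc]
    · simp [hK, Fin.last]; omega
    · intro x hx y hy hxy
      apply ha.injective
      have hx' := hle x
      have hy' := hle y
      simp only at hxy
      omega
  have hsub : Finset.Icc 0 (a K - a j - 1) ⊆ S + S := by
    intro t ht
    have ht' : t ≤ a K - a j - 1 := (mem_Icc.1 ht).2
    have htle : t + a j + 1 ≤ a K := by omega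
    have hmem : 2 * a K - t ∈ Finset.Icc 0 (2 * a K) := by
      rw [mem_Icc]; omega
    rw [← hres] at hmem
    obtain ⟨b, hb, c, hc, hbc⟩ := Finset.mem_add.1 hmem
    obtain ⟨x, -, hx⟩ := mem_image.1 hb
    obtain ⟨y, -, hy⟩ := mem_image.1 hc
    subst hx hy
    have hxK := hle x
    have hyK := hle y
    have hxj : a j < a x := by omega
    have hyj : a j < a y := by omega
    refine Finset.mem_add.2 ⟨a K - a x, ?_, a K - a y, ?_, by omega⟩
    · exact mem_image.2 ⟨x, mem_Ioc.2 ⟨(ha.lt_iff_lt).1 hxj, Fin.le_last x⟩, rfl⟩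
    · exact mem_image.2 ⟨y, mem_Ioc.2 ⟨(ha.lt_iff_lt).1 hyj, Fin.le_last y⟩, rfl⟩
  have hm : a K - a j - 1 ≤ N (k - j.val - 1) :=
    (hN (k - j.val - 1)).2 ⟨S, h0, hcard, hsub⟩
  omega
end

section
/- Let n₂(j) denote the maximum range over all bases of length j. If A = {a₀ < ⋯ < a_k} is a restricted basis, then for every 0 ≤ j ≤ k-2, the prefix A_j = {a₀,…,a_j} satisfies n₂(A_j) ≥ a_k - n₂(k-j-2) - 2. -/
open Finset Pointwise

theorem card_filter_ge_aux (n c : ℕ) :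
    (Finset.univ.filter (fun i : Fin n => c ≤ i.val)).card = n - c := by
  have h := Finset.card_nbij (fun i : Fin n => i.val)
    (s := Finset.univ.filter (fun i : Fin n => c ≤ i.val)) (t := Finset.Ico c n)
    (by intro x hx; simp at hx ⊢; omega)
    (by intro x hx y hy hxy; exact Fin.val_injective hxy)
    (by intro b hb; simp at hb ⊢; exact ⟨⟨b, hb.2⟩, hb.1, rfl⟩)
  rw [h, Nat.card_Ico]

theorem stmt_10 (N : ℕ → ℕ)
    (hN : ∀ j : ℕ, IsGreatest {m : ℕ | ∃ S : Finset ℕ, 0 ∈ S ∧ S.card = j + 1 ∧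
      Finset.Icc 0 m ⊆ S + S} (N j))
    (k : ℕ) (a : Fin (k + 1) → ℕ) (ha : StrictMono a)
    (hres : Finset.image a Finset.univ + Finset.image a Finset.univ =
      Finset.Icc 0 (2 * a (Fin.last k))) :
    ∀ j : Fin (k + 1), j.val + 2 ≤ k → ∀ nj : ℕ,
      IsGreatest {m : ℕ | Finset.Icc 0 m ⊆
        Finset.image a (Finset.univ.filter (· ≤ j)) +
          Finset.image a (Finset.univ.filter (· ≤ j))} nj →
      (a (Fin.last k) : ℤ) - N (k - j.val - 2) - 2 ≤ (nj : ℤ) := by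
  intro j hj nj hnj
  have haL : ∀ i, a i ≤ a (Fin.last k) := fun i => ha.monotone (Fin.le_last i)
  set Sj := Finset.image a (Finset.univ.filter (· ≤ j)) with hSj
  -- nj ≤ 2 * a j
  have hmem : nj ∈ Sj + Sj := hnj.1 (Finset.mem_Icc.mpr ⟨Nat.zero_le _, le_rfl⟩)
  rw [Finset.mem_add] at hmem
  obtain ⟨x, hx, y, hy, hxy⟩ := hmem
  simp only [hSj, Finset.mem_image, Finset.mem_filter, Finset.mem_univ, true_and] at hx hy
  obtain ⟨u, hu, rfl⟩ := hx
  obtain ⟨v, hv, rfl⟩ := hy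
  have h2aj : nj ≤ 2 * a j := by
    have h1 := ha.monotone hu
    have h2 := ha.monotone hv
    omega
  have hjL : a j < a (Fin.last k) := ha (by rw [Fin.lt_def, Fin.val_last]; omega)
  -- nj + 1 not representable by prefix
  have hnot : nj + 1 ∉ Sj + Sj := by
    intro h
    have hle : nj + 1 ≤ nj := hnj.2 (fun x hx => by
      rcases Finset.mem_Icc.mp hx with ⟨_, hx2⟩
      rcases Nat.lt_or_ge x (nj + 1) with h' | h'
      · exact hnj.1 (Finset.mem_Icc.mpr ⟨Nat.zero_le _, by omega⟩)
      · have hxe : x = nj + 1 := by omega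
        rw [hxe]; exact h)
    omega
  -- nj + 1 representable by A
  have hrep : nj + 1 ∈ Finset.Icc 0 (2 * a (Fin.last k)) :=
    Finset.mem_Icc.mpr ⟨Nat.zero_le _, by omega⟩
  rw [← hres, Finset.mem_add] at hrep
  obtain ⟨x, hx, y, hy, hxy2⟩ := hrep
  simp only [Finset.mem_image, Finset.mem_univ, true_and] at hx hy
  obtain ⟨p, rfl⟩ := hx
  obtain ⟨q, rfl⟩ := hy
  have hpq : j < p ∨ j < q := by
    by_contra h
    push_neg at h
    refine hnot (Finset.mem_add.mpr ⟨a p, ?_, a q, ?_, hxy2⟩)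
    · simp only [hSj, Finset.mem_image, Finset.mem_filter, Finset.mem_univ, true_and]
      exact ⟨p, h.1, rfl⟩
    · simp only [hSj, Finset.mem_image, Finset.mem_filter, Finset.mem_univ, true_and]
      exact ⟨q, h.2, rfl⟩
  have hj1 : j.val + 1 < k + 1 := by omega
  have hsucc : a ⟨j.val + 1, hj1⟩ ≤ nj + 1 := by
    rcases hpq with h | h
    · have h1 : a ⟨j.val + 1, hj1⟩ ≤ a p := ha.monotone (by
        rw [Fin.le_def]; simp only []; rw [Fin.lt_def] at h; omega)
      omega
    · have h1 : a ⟨j.val + 1, hj1⟩ ≤ a q := ha.monotone (by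
        rw [Fin.le_def]; simp only []; rw [Fin.lt_def] at h; omega)
      omega
  -- main argument
  have hub := (hN (k - j.val - 2)).2
  rcases Nat.lt_or_ge (a (Fin.last k)) (nj + 3) with hcase | hcase
  · have hN0 : 0 ≤ N (k - j.val - 2) := Nat.zero_le _
    omega
  · set M := a (Fin.last k) - nj - 2 with hM
    set T := Finset.image (fun i => a (Fin.last k) - a i)
        (Finset.univ.filter (fun i : Fin (k + 1) => j.val + 2 ≤ i.val)) with hT
    have h0T : 0 ∈ T := by
      rw [hT]
      simp only [Finset.mem_image, Finset.mem_filter, Finset.mem_univ, true_and]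
      exact ⟨Fin.last k, by rw [Fin.val_last]; omega, by omega⟩
    have hcardT : T.card = (k - j.val - 2) + 1 := by
      rw [hT, Finset.card_image_of_injOn, card_filter_ge_aux]
      · omega
      · intro x hx y hy hxy
        simp only [Finset.coe_filter, Set.mem_setOf_eq] at hx hy
        have h1 := haL x
        have h2 := haL y
        have hxy' : a (Fin.last k) - a x = a (Fin.last k) - a y := hxy
        have h3 : a x = a y := by omega
        exact ha.injective h3
    have hsub : Finset.Icc 0 M ⊆ T + T := by
      intro m hm
      rw [Finset.mem_Icc] at hm
      have hm2 : 2 * a (Fin.last k) - m ∈ Finset.Icc 0 (2 * a (Fin.last k)) := by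
        rw [Finset.mem_Icc]; omega
      rw [← hres, Finset.mem_add] at hm2
      obtain ⟨x, hx, y, hy, hxy3⟩ := hm2
      simp only [Finset.mem_image, Finset.mem_univ, true_and] at hx hy
      obtain ⟨s, rfl⟩ := hx
      obtain ⟨t, rfl⟩ := hy
      have hsk : j.val + 2 ≤ s.val := by
        by_contra h
        have hs : a s ≤ a ⟨j.val + 1, hj1⟩ := ha.monotone (by rw [Fin.le_def]; simp only []; omega)
        have ht := haL t
        omega
      have htk : j.val + 2 ≤ t.val := by
        by_contra h
        have hs : a t ≤ a ⟨j.val + 1, hj1⟩ := ha.monotone (by rw [Fin.le_def]; simp only []; omega)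
        have ht := haL s
        omega
      rw [Finset.mem_add]
      refine ⟨a (Fin.last k) - a s, ?_, a (Fin.last k) - a t, ?_, ?_⟩
      · rw [hT]
        simp only [Finset.mem_image, Finset.mem_filter, Finset.mem_univ, true_and]
        exact ⟨s, hsk, rfl⟩
      · rw [hT]
        simp only [Finset.mem_image, Finset.mem_filter, Finset.mem_univ, true_and]
        exact ⟨t, htk, rfl⟩
      · have h1 := haL s
        have h2 := haL t
        omega
    have hMle : M ≤ N (k - j.val - 2) := hub ⟨T, h0T, hcardT, hsub⟩
    omega
end
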